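/- Let τ > 0, ε > 0, let Q (m×m) and R (p×p) be real symmetric positive definite matrices with positive semidefinite square roots Q^{1/2}, R^{1/2}, and set Q̃ = Q/(1 + ε²), R̃ = R/(1 + ε²). Let X₀ be a real symmetric positive definite n×n matrix, x₀, x̄ ∈ ℝⁿ, and d₁, d₂ > 0. Let v : [0,τ] → ℝᵐ, w : [0,τ] → ℝᵖ and z : [0,τ] → ℝʳ be measurable, and let Δ₁(t) (m×r) and Δ₂(t) (p×r) be measurable matrix-valued functions such that for every t ∈ [0,τ] the operator norm of [Δ₁(t)ᵀQ^{1/2} Δ₂(t)ᵀR^{1/2}] is at most 1. Define ṽ(t) = Δ₁(t)z(t) + v(t) and w̃(t) = Δ₂(t)z(t) + w(t), and assume all the quadratic integrands below are integrable on [0,τ]. If ∫₀^τ (v(t)ᵀQ v(t) + w(t)ᵀR w(t)) dt ≤ d₁ and (x̄ − x₀)ᵀX₀(x̄ − x₀) ≤ d₂, then (x̄ − x₀)ᵀX₀(x̄ − x₀) + ∫₀^τ (ṽ(t)ᵀQ̃ṽ(t) + w̃(t)ᵀR̃w̃(t)) dt ≤ ((1 + 1/ε²)/(1 + ε²))·d₁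 + d₂ + ∫₀^τ ‖z(t)‖² dt. -/

import Mathlib

open Matrix

open Matrix

lemma scalar_key {δ A B C : ℝ} (hδ : 0 < δ) (hA : 0 ≤ A) (hB : 0 ≤ B)
    (hC : C ^ 2 ≤ A * B) : 2 * δ * C ≤ δ ^ 2 * A + B := by
  have hpos : 0 ≤ δ ^ 2 * A + B := by positivity
  have h2 : (2 * δ * C) ^ 2 ≤ (δ ^ 2 * A + B) ^ 2 := by
    nlinarith [sq_nonneg (δ ^ 2 * A - B),
      mul_le_mul_of_nonneg_left hC (by positivity : (0:ℝ) ≤ 4 * δ ^ 2)]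
  calc 2 * δ * C ≤ |2 * δ * C| := le_abs_self _
  _ = Real.sqrt ((2 * δ * C) ^ 2) := (Real.sqrt_sq_eq_abs _).symm
  _ ≤ Real.sqrt ((δ ^ 2 * A + B) ^ 2) := Real.sqrt_le_sqrt h2
  _ = |δ ^ 2 * A + B| := Real.sqrt_sq_eq_abs _
  _ = δ ^ 2 * A + B := abs_of_nonneg hpos

lemma scalar_ineq {ε A B C : ℝ} (hε : 0 < ε) (hA : 0 ≤ A) (hB : 0 ≤ B)
    (hC : C ^ 2 ≤ A * B) : 2 * C ≤ ε ^ 2 * A + ε⁻¹ ^ 2 * B := by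
  have hδ : 0 < ε ^ 2 := by positivity
  have hinv : ε⁻¹ ^ 2 = (ε ^ 2)⁻¹ := by field_simp
  rw [hinv]
  have key := scalar_key hδ hA hB hC
  calc 2 * C = (ε^2)⁻¹ * (2 * ε^2 * C) := by field_simp
  _ ≤ (ε^2)⁻¹ * ((ε^2)^2 * A + B) := mul_le_mul_of_nonneg_left key (inv_pos.2 hδ).le
  _ = ε ^ 2 * A + (ε^2)⁻¹ * B := by field_simp
open Matrix

lemma dot_self_nonneg' {α : Type*} [Fintype α] (a : α → ℝ) : 0 ≤ a ⬝ᵥ a :=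
  Finset.sum_nonneg fun _ _ => mul_self_nonneg _

lemma dot_cauchy {α : Type*} [Fintype α] (a b : α → ℝ) :
    (a ⬝ᵥ b) ^ 2 ≤ (a ⬝ᵥ a) * (b ⬝ᵥ b) := by
  simpa [dotProduct, sq] using Finset.sum_mul_sq_le_sq_mul_sq Finset.univ a b

lemma norm_equiv_symm {γ : Type*} [Fintype γ] (x : γ → ℝ) :
    ‖(WithLp.equiv 2 (γ → ℝ)).symm x‖ = Real.sqrt (x ⬝ᵥ x) := by
  rw [EuclideanSpace.norm_eq]
  congr 1
  simp [dotProduct, WithLp.equiv_symm_apply, PiLp.toLp_apply, Real.norm_eq_abs, sq_abs, sq]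

/-- norm bound for euclidean map gives dot product bound for mulVec -/
lemma euclid_to_dot {α β : Type*} [Fintype α] [Fintype β] [DecidableEq α] [DecidableEq β]
    (M : Matrix β α ℝ)
    (h : ∀ y : EuclideanSpace ℝ α, ‖(Matrix.toEuclideanLin M) y‖ ≤ ‖y‖) :
    ∀ y : α → ℝ, (M *ᵥ y) ⬝ᵥ (M *ᵥ y) ≤ y ⬝ᵥ y := by
  intro y
  have h1 := h ((WithLp.equiv 2 (α → ℝ)).symm y)
  change ‖(WithLp.equiv 2 (β → ℝ)).symm (M *ᵥ y)‖ ≤ _ at h1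
  rw [norm_equiv_symm, norm_equiv_symm] at h1
  exact (Real.sqrt_le_sqrt_iff (dot_self_nonneg' y)).mp h1

/-- transpose also contractive (in dot product form) -/
lemma transpose_contract {α β : Type*} [Fintype α] [Fintype β]
    (M : Matrix β α ℝ)
    (h : ∀ y : α → ℝ, (M *ᵥ y) ⬝ᵥ (M *ᵥ y) ≤ y ⬝ᵥ y) :
    ∀ u : β → ℝ, (Mᵀ *ᵥ u) ⬝ᵥ (Mᵀ *ᵥ u) ≤ u ⬝ᵥ u := by
  intro u
  set s := Mᵀ *ᵥ u with hs
  have key : s ⬝ᵥ s = (M *ᵥ s) ⬝ᵥ u := by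
    rw [hs]
    rw [Matrix.dotProduct_mulVec, Matrix.vecMul_transpose]
  have h2 : (s ⬝ᵥ s) ^ 2 ≤ (s ⬝ᵥ s) * (u ⬝ᵥ u) := by
    calc (s ⬝ᵥ s) ^ 2 = ((M *ᵥ s) ⬝ᵥ u) ^ 2 := by rw [key]
    _ ≤ ((M *ᵥ s) ⬝ᵥ (M *ᵥ s)) * (u ⬝ᵥ u) := dot_cauchy _ _
    _ ≤ (s ⬝ᵥ s) * (u ⬝ᵥ u) := by
        exact mul_le_mul_of_nonneg_right (h s) (dot_self_nonneg' u)
  rcases eq_or_lt_of_le (dot_self_nonneg' s) with h0 | h0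
  · rw [← h0]; exact dot_self_nonneg' u
  · nlinarith [h2, h0]

lemma vec_split_ineq {α : Type*} [Fintype α] {ε : ℝ} (hε : 0 < ε) (a b : α → ℝ) :
    (a + b) ⬝ᵥ (a + b) ≤ (1 + ε ^ 2) * (a ⬝ᵥ a) + (1 + ε⁻¹ ^ 2) * (b ⬝ᵥ b) := by
  have hexp : (a + b) ⬝ᵥ (a + b) = a ⬝ᵥ a + 2 * (a ⬝ᵥ b) + b ⬝ᵥ b := by
    rw [add_dotProduct, dotProduct_add, dotProduct_add,
      dotProduct_comm b a]
    ring
  have := scalar_ineq hε (dot_self_nonneg' a) (dot_self_nonneg' b) (dot_cauchy a b)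
  linarith

lemma sqrt_dot {α : Type*} [Fintype α] {Q Qh : Matrix α α ℝ} (hQhs : Qhᵀ = Qh)
    (hsq : Qh * Qh = Q) (x : α → ℝ) :
    x ⬝ᵥ Q *ᵥ x = (Qh *ᵥ x) ⬝ᵥ (Qh *ᵥ x) := by
  rw [← hsq, ← Matrix.mulVec_mulVec, Matrix.dotProduct_mulVec, ← Matrix.mulVec_transpose, hQhs]


/-- The integral quadratic constraint: given τ, ε > 0, positive definite
weights Q, R with psd square roots Qh, Rh, Q̃ = Q/(1+ε²), R̃ = R/(1+ε²),
positive definite X₀, vectors x₀, x̄, constants d₁, d₂ > 0, measurable noises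
v, w, uncertainty output z, and measurable uncertainty matrices Δ₁(t), Δ₂(t)
whose block [Δ₁ᵀQ^{1/2} Δ₂ᵀR^{1/2}] has operator norm ≤ 1 pointwise, if
∫₀^τ (vᵀQv + wᵀRw) ≤ d₁ and (x̄−x₀)ᵀX₀(x̄−x₀) ≤ d₂, then with ṽ = Δ₁z + v,
w̃ = Δ₂z + w we get
(x̄−x₀)ᵀX₀(x̄−x₀) + ∫₀^τ (ṽᵀQ̃ṽ + w̃ᵀR̃w̃) ≤ ((1+1/ε²)/(1+ε²))d₁ + d₂ + ∫₀^τ ‖z‖². -/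
theorem stmt_11 (n m p r : ℕ) (τ ε : ℝ) (hτ : 0 < τ) (hε : 0 < ε)
    (Q : Matrix (Fin m) (Fin m) ℝ) (R : Matrix (Fin p) (Fin p) ℝ)
    (hQ : Q.PosDef) (hR : R.PosDef)
    (Qh : Matrix (Fin m) (Fin m) ℝ) (Rh : Matrix (Fin p) (Fin p) ℝ)
    (hQh : Qh.PosSemidef) (hRh : Rh.PosSemidef)
    (hQhsq : Qh * Qh = Q) (hRhsq : Rh * Rh = R)
    (Qt : Matrix (Fin m) (Fin m) ℝ) (Rt : Matrix (Fin p) (Fin p) ℝ)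
    (hQt : Qt = (1 + ε ^ 2)⁻¹ • Q) (hRt : Rt = (1 + ε ^ 2)⁻¹ • R)
    (X0 : Matrix (Fin n) (Fin n) ℝ) (hX0 : X0.PosDef)
    (x0 xbar : Fin n → ℝ) (d1 d2 : ℝ) (hd1 : 0 < d1) (hd2 : 0 < d2)
    (v : ℝ → Fin m → ℝ) (w : ℝ → Fin p → ℝ) (z : ℝ → Fin r → ℝ)
    (hv : Measurable v) (hw : Measurable w) (hz : Measurable z)
    (Δ₁ : ℝ → Matrix (Fin m) (Fin r) ℝ) (Δ₂ : ℝ → Matrix (Fin p) (Fin r) ℝ)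
    (hΔ₁ : ∀ i j, Measurable fun t => Δ₁ t i j)
    (hΔ₂ : ∀ i j, Measurable fun t => Δ₂ t i j)
    (hnorm : ∀ t ∈ Set.Icc (0 : ℝ) τ,
      ∀ y : EuclideanSpace ℝ (Fin m ⊕ Fin p),
        ‖(Matrix.toEuclideanLin
            (Matrix.fromCols ((Δ₁ t)ᵀ * Qh) ((Δ₂ t)ᵀ * Rh))) y‖ ≤ ‖y‖)
    (vt : ℝ → Fin m → ℝ) (wt : ℝ → Fin p → ℝ)
    (hvt : ∀ t, vt t = (Δ₁ t).mulVec (z t) + v t)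
    (hwt : ∀ t, wt t = (Δ₂ t).mulVec (z t) + w t)
    (hint1 : IntervalIntegrable
      (fun t => v t ⬝ᵥ Q.mulVec (v t) + w t ⬝ᵥ R.mulVec (w t))
      MeasureTheory.volume 0 τ)
    (hint2 : IntervalIntegrable
      (fun t => vt t ⬝ᵥ Qt.mulVec (vt t) + wt t ⬝ᵥ Rt.mulVec (wt t))
      MeasureTheory.volume 0 τ)
    (hint3 : IntervalIntegrable (fun t => z t ⬝ᵥ z t)
      MeasureTheory.volume 0 τ)
    (hnoise : (∫ t in (0 : ℝ)..τ,
        (v t ⬝ᵥ Q.mulVec (v t) + w t ⬝ᵥ R.mulVec (w t))) ≤ d1)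
    (hinit : (xbar - x0) ⬝ᵥ X0.mulVec (xbar - x0) ≤ d2) :
    (xbar - x0) ⬝ᵥ X0.mulVec (xbar - x0) +
        (∫ t in (0 : ℝ)..τ,
          (vt t ⬝ᵥ Qt.mulVec (vt t) + wt t ⬝ᵥ Rt.mulVec (wt t))) ≤
      ((1 + 1 / ε ^ 2) / (1 + ε ^ 2)) * d1 + d2 +
        ∫ t in (0 : ℝ)..τ, z t ⬝ᵥ z t := by
  
  set c : ℝ := (1 + 1 / ε ^ 2) / (1 + ε ^ 2) with hc
  have h1ε : (0:ℝ) < 1 + ε ^ 2 := by positivity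
  have hcnn : (0:ℝ) ≤ c := by positivity
  have hQhs : Qhᵀ = Qh := by
    have h' : Qhᴴ = Qh := hQh.1
    rwa [Matrix.conjTranspose_eq_transpose_of_trivial] at h'
  have hRhs : Rhᵀ = Rh := by
    have h' : Rhᴴ = Rh := hRh.1
    rwa [Matrix.conjTranspose_eq_transpose_of_trivial] at h'
  have hpt : ∀ t ∈ Set.Icc (0:ℝ) τ,
      vt t ⬝ᵥ Qt *ᵥ vt t + wt t ⬝ᵥ Rt *ᵥ wt t ≤
        c * (v t ⬝ᵥ Q *ᵥ v t + w t ⬝ᵥ R *ᵥ w t) + z t ⬝ᵥ z t := by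
    intro t ht
    set a1 := Qh *ᵥ ((Δ₁ t) *ᵥ z t) with ha1
    set a2 := Rh *ᵥ ((Δ₂ t) *ᵥ z t) with ha2
    set b1 := Qh *ᵥ v t with hb1
    set b2 := Rh *ᵥ w t with hb2
    have hM := transpose_contract _ (euclid_to_dot _ (hnorm t ht))
    have hMT : (Matrix.fromCols ((Δ₁ t)ᵀ * Qh) ((Δ₂ t)ᵀ * Rh))ᵀ *ᵥ z t
        = Sum.elim a1 a2 := by
      rw [Matrix.transpose_fromCols, Matrix.transpose_mul, Matrix.transpose_mul,
        Matrix.transpose_transpose, Matrix.transpose_transpose, hQhs, hRhs,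
        Matrix.fromRows_mulVec, ha1, ha2, Matrix.mulVec_mulVec, Matrix.mulVec_mulVec]
    have hza : a1 ⬝ᵥ a1 + a2 ⬝ᵥ a2 ≤ z t ⬝ᵥ z t := by
      have := hM (z t)
      rwa [hMT, sumElim_dotProduct_sumElim] at this
    have hv1 : vt t ⬝ᵥ Q *ᵥ vt t = (a1 + b1) ⬝ᵥ (a1 + b1) := by
      rw [sqrt_dot hQhs hQhsq, hvt t, Matrix.mulVec_add]
    have hw1 : wt t ⬝ᵥ R *ᵥ wt t = (a2 + b2) ⬝ᵥ (a2 + b2) := by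
      rw [sqrt_dot hRhs hRhsq, hwt t, Matrix.mulVec_add]
    have hbv : b1 ⬝ᵥ b1 = v t ⬝ᵥ Q *ᵥ v t := (sqrt_dot hQhs hQhsq _).symm
    have hbw : b2 ⬝ᵥ b2 = w t ⬝ᵥ R *ᵥ w t := (sqrt_dot hRhs hRhsq _).symm
    have key1 := vec_split_ineq hε a1 b1
    have key2 := vec_split_ineq hε a2 b2
    have hmid : vt t ⬝ᵥ Q *ᵥ vt t + wt t ⬝ᵥ R *ᵥ wt t ≤
        (1 + ε ^ 2) * (z t ⬝ᵥ z t) +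
          (1 + ε⁻¹ ^ 2) * (v t ⬝ᵥ Q *ᵥ v t + w t ⬝ᵥ R *ᵥ w t) := by
      have h3 := mul_le_mul_of_nonneg_left hza h1ε.le
      rw [hv1, hw1]
      nlinarith [key1, key2, h3, hbv, hbw]
    have hsm : vt t ⬝ᵥ Qt *ᵥ vt t + wt t ⬝ᵥ Rt *ᵥ wt t =
        (1 + ε ^ 2)⁻¹ * (vt t ⬝ᵥ Q *ᵥ vt t + wt t ⬝ᵥ R *ᵥ wt t) := by
      rw [hQt, hRt, Matrix.smul_mulVec, Matrix.smul_mulVec,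
        dotProduct_smul, dotProduct_smul, smul_eq_mul, smul_eq_mul]
      ring
    rw [hsm]
    calc (1 + ε ^ 2)⁻¹ * (vt t ⬝ᵥ Q *ᵥ vt t + wt t ⬝ᵥ R *ᵥ wt t)
        ≤ (1 + ε ^ 2)⁻¹ * ((1 + ε ^ 2) * (z t ⬝ᵥ z t) +
            (1 + ε⁻¹ ^ 2) * (v t ⬝ᵥ Q *ᵥ v t + w t ⬝ᵥ R *ᵥ w t)) :=
          mul_le_mul_of_nonneg_left hmid (inv_nonneg.2 h1ε.le)
      _ = c * (v t ⬝ᵥ Q *ᵥ v t + w t ⬝ᵥ R *ᵥ w t) + z t ⬝ᵥ z t := by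
          rw [hc]
          field_simp
          ring
  have hint4 : IntervalIntegrable
      (fun t => c * (v t ⬝ᵥ Q *ᵥ v t + w t ⬝ᵥ R *ᵥ w t) + z t ⬝ᵥ z t)
      MeasureTheory.volume 0 τ := (hint1.const_mul c).add hint3
  have hI := intervalIntegral.integral_mono_on hτ.le hint2 hint4 hpt
  rw [intervalIntegral.integral_add (hint1.const_mul c) hint3,
    intervalIntegral.integral_const_mul] at hI
  have hcd : c * (∫ t in (0:ℝ)..τ,
      (v t ⬝ᵥ Q *ᵥ v t + w t ⬝ᵥ R *ᵥ w t)) ≤ c * d1 :=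
    mul_le_mul_of_nonneg_left hnoise hcnn
  linarith
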